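/- Let m ≥ 1, let M be an m×m complex matrix, let λ ∈ ℂ with λ ≠ 0 be such that λ² is a simple root of the characteristic polynomial of M, and let a ∈ ℂ^m be a nonzero vector with M a = λ² a. Then: (i) a does not lie in the range of M − λ²I, and ℂ^m is the direct sum of the line spanned by a and the range of M − λ²I; and (ii) for every m×m complex matrix K, the linear map U : ℂ^m × ℂ × ℂ^m → ℂ^m × ℂ^m defined by U(x, y₀, y) = ((M − λ²I)x − 2λ y₀ a + K y, (M − I)y) has kernel of dimension dim ker(M − I) + 1. -/

import Mathlib

open Polynomial Matrix Module

private lemma charpoly_shift' {m : ℕ} (M : Matrix (Fin m) (Fin m) ℂ) (μ : ℂ) :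
    (M - μ • 1).charpoly = M.charpoly.comp (X + C μ) := by
  rw [comp_eq_aeval, Matrix.charpoly, Matrix.charpoly, AlgHom.map_det]
  congr 1
  ext i j
  rcases eq_or_ne i j with rfl | h
  · simp only [charmatrix_apply_eq, Matrix.sub_apply, Matrix.smul_apply, Matrix.one_apply_eq,
      AlgHom.mapMatrix_apply, Matrix.map_apply, map_sub, aeval_X, aeval_C, smul_eq_mul, mul_one]
    rw [Polynomial.algebraMap_eq]
    ring
  · simp [charmatrix_apply_ne _ _ _ h, Matrix.sub_apply, Matrix.smul_apply, Matrix.one_apply_ne h]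

private lemma charpoly_mulVecLin' {m : ℕ} (A : Matrix (Fin m) (Fin m) ℂ) :
    LinearMap.charpoly A.mulVecLin = A.charpoly := by
  rw [← Matrix.toLin'_apply', ← LinearMap.charpoly_toMatrix (Matrix.toLin' A) (Pi.basisFun ℂ (Fin m)),
    LinearMap.toMatrix_eq_toMatrix', LinearMap.toMatrix'_toLin']



/-- Let `M` be an `m × m` complex matrix, `λ ≠ 0` with `λ²` a simple root of the
characteristic polynomial of `M`, and `a ≠ 0` with `M a = λ² a`.  Then:
(i) `a` is not in the range of `M - λ²I`, and `ℂ^m` is the direct sum of the line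
spanned by `a` and the range of `M - λ²I`; and
(ii) for every `m × m` matrix `K`, the linear map
`U(x, y₀, y) = ((M - λ²I) x - 2 λ y₀ a + K y, (M - I) y)` has kernel of dimension
`dim ker (M - I) + 1`. -/
theorem eigenvector_complement_and_kernel_dim (m : ℕ) (hm : 1 ≤ m)
    (M : Matrix (Fin m) (Fin m) ℂ) (lam : ℂ) (hlam : lam ≠ 0)
    (hsimple : M.charpoly.rootMultiplicity (lam ^ 2) = 1)
    (a : Fin m → ℂ) (ha : a ≠ 0) (hMa : M.mulVec a = lam ^ 2 • a) :
    (a ∉ LinearMap.range (M - lam ^ 2 • (1 : Matrix (Fin m) (Fin m) ℂ)).mulVecLin ∧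
      IsCompl (Submodule.span ℂ {a})
        (LinearMap.range (M - lam ^ 2 • (1 : Matrix (Fin m) (Fin m) ℂ)).mulVecLin)) ∧
    (∀ K : Matrix (Fin m) (Fin m) ℂ,
      ∀ U : ((Fin m → ℂ) × ℂ × (Fin m → ℂ)) →ₗ[ℂ] ((Fin m → ℂ) × (Fin m → ℂ)),
        (∀ (x : Fin m → ℂ) (y₀ : ℂ) (y : Fin m → ℂ),
          U (x, y₀, y) =
            ((M - lam ^ 2 • (1 : Matrix (Fin m) (Fin m) ℂ)).mulVec x - (2 * lam * y₀) • a +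
                K.mulVec y,
              (M - 1).mulVec y)) →
        Module.finrank ℂ (LinearMap.ker U) =
          Module.finrank ℂ (LinearMap.ker (M - (1 : Matrix (Fin m) (Fin m) ℂ)).mulVecLin) + 1) := by
  classical
  set μ : ℂ := lam ^ 2 with hμ
  set A : Matrix (Fin m) (Fin m) ℂ := M - μ • 1 with hA
  set f : (Fin m → ℂ) →ₗ[ℂ] (Fin m → ℂ) := A.mulVecLin with hf
  have hfapp : ∀ v, f v = M.mulVec v - μ • v := by
    intro v
    simp [hf, hA, Matrix.mulVecLin_apply, Matrix.sub_mulVec, Matrix.smul_mulVec,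
      Matrix.one_mulVec]
  have hfa : f a = 0 := by rw [hfapp, hMa, sub_self]
  -- finrank of kernel of f is 1, and it's the span of a
  have hcp : LinearMap.charpoly f = M.charpoly.comp (X + C μ) := by
    rw [hf, charpoly_mulVecLin', hA, charpoly_shift']
  have htd : (LinearMap.charpoly f).natTrailingDegree = 1 := by
    rw [hcp, ← Polynomial.rootMultiplicity_eq_natTrailingDegree, hsimple]
  have hker_le : LinearMap.ker f ≤ Module.End.maxGenEigenspace f 0 := by
    intro v hv
    rw [Module.End.mem_maxGenEigenspace]
    exact ⟨1, by simpa using LinearMap.mem_ker.mp hv⟩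
  have hker1 : finrank ℂ (LinearMap.ker f) ≤ 1 := by
    have := Submodule.finrank_mono hker_le
    rwa [LinearMap.finrank_maxGenEigenspace_zero_eq, htd] at this
  have hspan_le : Submodule.span ℂ {a} ≤ LinearMap.ker f := by
    rw [Submodule.span_singleton_le_iff_mem]; exact LinearMap.mem_ker.mpr hfa
  have hker_eq : Submodule.span ℂ {a} = LinearMap.ker f := by
    refine Submodule.eq_of_le_of_finrank_le hspan_le ?_
    rw [finrank_span_singleton ha]; exact hker1
  -- disjointness of kernel and range
  have hdisj : Disjoint (LinearMap.ker f) (LinearMap.range f) := by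
    rw [Submodule.disjoint_def]
    intro v hv hvr
    rcases eq_or_ne v 0 with rfl | hv0
    · rfl
    obtain ⟨w, hw⟩ := hvr
    obtain ⟨q, hq, hndvd⟩ :=
      (M.charpoly).exists_eq_pow_rootMultiplicity_mul_and_not_dvd (M.charpoly_monic.ne_zero) μ
    rw [hsimple, pow_one] at hq
    have hqμ : q.eval μ ≠ 0 := fun h => hndvd (Polynomial.dvd_iff_isRoot.mpr h)
    set φ : Module.End ℂ (Fin m → ℂ) := M.mulVecLin with hφ
    have hφf : f = φ - μ • 1 := by
      ext v
      simp [hfapp, hφ, Matrix.mulVecLin_apply]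
    have hMv : φ v = μ • v := by
      have h0 : f v = 0 := hv
      rw [hfapp, sub_eq_zero] at h0
      show M.mulVecLin v = μ • v
      rw [Matrix.mulVecLin_apply, h0]
    have heig : (aeval φ q) v = q.eval μ • v :=
      Module.End.aeval_apply_of_hasEigenvector
        ⟨Module.End.mem_eigenspace_iff.mpr hMv, hv0⟩ (p := q)
    have hcay : aeval φ M.charpoly = 0 := by
      have h1 : aeval ((Matrix.toLinAlgEquiv' : Matrix (Fin m) (Fin m) ℂ ≃ₐ[ℂ]
          Module.End ℂ (Fin m → ℂ)).toAlgHom M) M.charpoly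
          = (Matrix.toLinAlgEquiv').toAlgHom (aeval M M.charpoly) :=
        Polynomial.aeval_algHom_apply _ M M.charpoly
      rw [M.aeval_self_charpoly, map_zero] at h1
      rw [← h1]
      congr 1
    have hzero : (aeval φ q) v = 0 := by
      have hmul : (aeval φ q) * f = 0 := by
        have hXC : (φ - μ • 1 : Module.End ℂ (Fin m → ℂ)) = aeval φ (X - C μ) := by
          simp [Module.algebraMap_end_eq_smul_id, Module.End.one_eq_id]
        rw [hφf, hXC, ← _root_.map_mul,
          show q * (X - C μ) = M.charpoly by rw [hq]; ring, hcay]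
      calc (aeval φ q) v = ((aeval φ q) * f) w := by rw [← hw]; rfl
        _ = 0 := by rw [hmul]; rfl
    rw [heig] at hzero
    exact (smul_eq_zero.mp hzero).resolve_left hqμ
  -- codisjointness
  have hrn : finrank ℂ (LinearMap.range f) + finrank ℂ (LinearMap.ker f) = m := by
    have := LinearMap.finrank_range_add_finrank_ker f
    simpa using this
  have hcod : Codisjoint (LinearMap.ker f) (LinearMap.range f) := by
    rw [codisjoint_iff]
    apply Submodule.eq_top_of_finrank_eq
    have h1 := Submodule.finrank_sup_add_finrank_inf_eq (LinearMap.ker f) (LinearMap.range f)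
    rw [hdisj.eq_bot, finrank_bot, add_zero] at h1
    rw [h1]
    have h2 : finrank ℂ (Fin m → ℂ) = m := by simp
    omega
  have hcompl : IsCompl (Submodule.span ℂ {a}) (LinearMap.range f) := by
    rw [hker_eq]; exact ⟨hdisj, hcod⟩
  have haR : a ∉ LinearMap.range f := by
    intro h
    have : a ∈ LinearMap.ker f ⊓ LinearMap.range f := ⟨LinearMap.mem_ker.mpr hfa, h⟩
    rw [hdisj.eq_bot, Submodule.mem_bot] at this
    exact ha this
  refine ⟨⟨haR, hcompl⟩, ?_⟩
  -- part (ii)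
  intro K U hU
  set B : (Fin m → ℂ) →ₗ[ℂ] (Fin m → ℂ) := (M - 1).mulVecLin with hB
  set π : ((Fin m → ℂ) × ℂ × (Fin m → ℂ)) →ₗ[ℂ] (Fin m → ℂ) :=
    (LinearMap.snd ℂ ℂ (Fin m → ℂ)).comp
      (LinearMap.snd ℂ (Fin m → ℂ) (ℂ × (Fin m → ℂ))) with hπ
  have hπapp : ∀ u : ((Fin m → ℂ) × ℂ × (Fin m → ℂ)), π u = u.2.2 := fun _ => rfl
  have hUker : ∀ u ∈ LinearMap.ker U, B (π u) = 0 := by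
    rintro ⟨x, y₀, y⟩ hu
    have h1 := LinearMap.mem_ker.mp hu
    rw [hU] at h1
    have := congrArg Prod.snd h1
    exact this
  set Ψ : LinearMap.ker U →ₗ[ℂ] LinearMap.ker B :=
    LinearMap.codRestrict (LinearMap.ker B) (π.comp (LinearMap.ker U).subtype)
      (fun u => LinearMap.mem_ker.mpr (hUker u.1 u.2)) with hΨ
  have hΨsurj : Function.Surjective Ψ := by
    rintro ⟨y, hy⟩
    have hy' : (M - 1).mulVec y = 0 := by
      exact LinearMap.mem_ker.mp hy
    have hmem : -(K.mulVec y) ∈ Submodule.span ℂ {a} ⊔ LinearMap.range f := by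
      rw [hcompl.sup_eq_top]; trivial
    obtain ⟨s, hs, r, hr, hsr⟩ := Submodule.mem_sup.mp hmem
    obtain ⟨c, rfl⟩ := Submodule.mem_span_singleton.mp hs
    obtain ⟨x, rfl⟩ := hr
    have hy₀ : 2 * lam * (-c / (2 * lam)) = -c := by
      field_simp
    refine ⟨⟨(x, -c / (2 * lam), y), ?_⟩, ?_⟩
    · rw [LinearMap.mem_ker, hU]
      have h2 : A.mulVec x - (2 * lam * (-c / (2 * lam))) • a + K.mulVec y = 0 := by
        rw [hy₀]
        have : f x = A.mulVec x := rfl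
        rw [← this]
        have := hsr
        rw [neg_smul, sub_neg_eq_add]
        linear_combination (norm := module) hsr
      rw [Prod.mk_eq_zero]
      exact ⟨h2, hy'⟩
    · apply Subtype.ext
      rfl
  have hθmem : ((a, 0, 0) : (Fin m → ℂ) × ℂ × (Fin m → ℂ)) ∈ LinearMap.ker U := by
    rw [LinearMap.mem_ker, hU]
    have : A.mulVec a = 0 := hfa
    simp [this, Prod.mk_eq_zero]
  set v₀ : LinearMap.ker U := ⟨(a, 0, 0), hθmem⟩ with hv₀
  have hv₀ne : v₀ ≠ 0 := by
    intro h
    apply ha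
    have := congrArg (fun z : LinearMap.ker U => (z : (Fin m → ℂ) × ℂ × (Fin m → ℂ)).1) h
    simpa using this
  set θ : ℂ →ₗ[ℂ] LinearMap.ker U := LinearMap.toSpanSingleton ℂ _ v₀ with hθ
  have hkerΨ : LinearMap.ker Ψ = LinearMap.range θ := by
    ext u
    constructor
    · intro hu
      obtain ⟨⟨x, y₀, y⟩, hmem⟩ := u
      have hy : y = 0 := by
        have := congrArg Subtype.val (LinearMap.mem_ker.mp hu)
        simpa [hΨ, hπapp] using this
      subst hy
      have h1 := LinearMap.mem_ker.mp hmem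
      rw [hU] at h1
      have hfst : A.mulVec x - (2 * lam * y₀) • a + K.mulVec 0 = 0 := congrArg Prod.fst h1
      rw [Matrix.mulVec_zero, add_zero, sub_eq_zero] at hfst
      have hy₀ : y₀ = 0 := by
        by_contra hne
        apply haR
        refine ⟨(2 * lam * y₀)⁻¹ • x, ?_⟩
        have hfx : f x = (2 * lam * y₀) • a := hfst
        rw [_root_.map_smul, hfx, smul_smul,
          inv_mul_cancel₀ (mul_ne_zero (mul_ne_zero two_ne_zero hlam) hne), one_smul]
      subst hy₀
      have hx : x ∈ Submodule.span ℂ {a} := by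
        rw [hker_eq, LinearMap.mem_ker]
        show f x = 0
        have : (2 * lam * (0:ℂ)) • a = (0 : Fin m → ℂ) := by simp
        rw [show f x = A.mulVec x from rfl, hfst, this]
      obtain ⟨t, ht⟩ := Submodule.mem_span_singleton.mp hx
      refine ⟨t, ?_⟩
      apply Subtype.ext
      show t • ((a, 0, 0) : (Fin m → ℂ) × ℂ × (Fin m → ℂ)) = (x, 0, 0)
      rw [Prod.smul_mk, Prod.smul_mk, ht]
      simp
    · rintro ⟨t, rfl⟩
      rw [LinearMap.mem_ker]
      apply Subtype.ext
      show π ((θ t : LinearMap.ker U) : (Fin m → ℂ) × ℂ × (Fin m → ℂ)) = 0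
      have : ((θ t : LinearMap.ker U) : (Fin m → ℂ) × ℂ × (Fin m → ℂ))
          = t • ((a, 0, 0) : (Fin m → ℂ) × ℂ × (Fin m → ℂ)) := rfl
      rw [this]
      simp [hπapp]
  have hkerΨrank : finrank ℂ (LinearMap.ker Ψ) = 1 := by
    rw [hkerΨ, ← LinearMap.span_singleton_eq_range, finrank_span_singleton hv₀ne]
  have hrangeΨ : LinearMap.range Ψ = ⊤ := LinearMap.range_eq_top.mpr hΨsurj
  have := LinearMap.finrank_range_add_finrank_ker Ψ
  rw [hrangeΨ, finrank_top, hkerΨrank] at this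
  rw [← this]
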